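/- Let B_1 and B_2 be two plane binary trees, each with n leaves, having c_1 and c_2 cherries respectively, and let k be a fixed nonnegative integer. Then the number of perfect matchings (bijections) between the leaf set of B_1 and the leaf set of B_2 under which exactly k cherries of B_1 are matched to cherries of B_2 (both leaves of the cherry of B_1 going to the two leaves of a single cherry of B_2) equals binom(c_1, k)·binom(c_2, k)·k!·2^k·Σ_{ℓ≥0} (−1)^ℓ binom(c_1−k, ℓ) binom(c_2−k, ℓ)·ℓ!·2^ℓ·(n−2k−2ℓ)!. -/

import Mathlib

open scoped Classical

inductive PTree : Type
  | leaf : PTree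
  | node : PTree → PTree → PTree
deriving DecidableEq

namespace PTree

def size : PTree → ℕ
  | leaf => 1
  | node l r => size l + size r

def cherries : PTree → ℕ
  | leaf => 0
  | node leaf leaf => 1
  | node l r => cherries l + cherries r

def height : PTree → ℕ
  | leaf => 0
  | node l r => max (height l) (height r) + 1

def encode : PTree → ℕ
  | leaf => 0
  | node l r => Nat.pair (encode l) (encode r) + 1

def normalize : PTree → PTree
  | leaf => leaf
  | node l r =>
      let l' := normalize l
      let r' := normalize r
      if encode l' ≤ encode r' then node l' r' else node r' l'

def isoFuns : PTree → PTree → List (ℕ → ℕ)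
  | leaf, leaf => [fun i => i]
  | node l r, node l' r' =>
      ((isoFuns l l').flatMap fun g => (isoFuns r r').map fun h =>
        fun i => if i < l.size then g i else h (i - l.size) + l'.size)
      ++
      ((isoFuns l r').flatMap fun g => (isoFuns r l').map fun h =>
        fun i => if i < l.size then g i + l'.size else h (i - l.size))
  | _, _ => []

def planeTrees : ℕ → Finset PTree
  | 0 => ∅
  | 1 => {leaf}
  | n + 2 =>
      (Finset.range (n + 1)).attach.biUnion fun k =>
        ((planeTrees (k.1 + 1)) ×ˢ (planeTrees (n + 1 - k.1))).image
          fun p => node p.1 p.2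
  termination_by n => n
  decreasing_by
  · have := Finset.mem_range.mp k.2; omega
  · omega

def binTrees (n : ℕ) : Finset PTree := (planeTrees n).image normalize

/-- Triples (T, v, S): left plane tree, right plane tree, and a matching `v`
(a permutation of `0, …, n-1`, encoded as the list of its values) matching
leaf `i` of `T` with leaf `v i` of `S`. -/
def Triples (n : ℕ) : Finset (PTree × PTree × List ℕ) :=
  (planeTrees n) ×ˢ ((planeTrees n) ×ˢ (List.range n).permutations.toFinset)

/-- Two triples represent the same tanglegram iff there are isomorphisms of the left
trees and of the right trees compatible with the matchings. -/
def equivTriple (n : ℕ) (t t' : PTree × PTree × List ℕ) : Bool :=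
  (isoFuns t.1 t'.1).any fun φ => (isoFuns t.2.1 t'.2.1).any fun ψ =>
    (List.range n).all fun i => t'.2.2.getD (φ i) 0 == ψ (t.2.2.getD i 0)

/-- The tanglegrams of size `n`: equivalence classes of triples. -/
def tangleClasses (n : ℕ) : Finset (Finset (PTree × PTree × List ℕ)) :=
  (Triples n).image fun t => (Triples n).filter (fun t' => equivTriple n t t' = true)

/-- The number of tanglegrams of size `n`. -/
def numTanglegrams (n : ℕ) : ℕ := (tangleClasses n).card

/-- The probability that a uniformly random tanglegram of size `n` satisfies the
(isomorphism-invariant) property `P` of triples. -/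
noncomputable def tangleProb (n : ℕ) (P : PTree × PTree × List ℕ → Prop) : ℝ :=
  ((tangleClasses n).filter fun c => ∃ t ∈ c, P t).card / numTanglegrams n

/-- The expectation of the statistic `f` of a uniformly random tanglegram of size `n`. -/
noncomputable def tangleExp (n : ℕ) (f : PTree × PTree × List ℕ → ℕ) : ℝ :=
  ∑' k : ℕ, (k : ℝ) * tangleProb n (fun t => f t = k)

end PTree

namespace PTree

/-- The distribution on pairs of binary trees (canonical representatives) induced by
the two halves of a uniformly random tanglegram of size `n`:
probability that the pair of isomorphism classes of the two trees lies in `S`. -/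
noncomputable def nuT (n : ℕ) (S : Finset (PTree × PTree)) : ℝ :=
  tangleProb n fun t => (normalize t.1, normalize t.2.1) ∈ S

/-- The distribution on pairs of binary trees induced by two independent uniformly
random plane binary trees with `n` leaves. -/
noncomputable def nuP (n : ℕ) (S : Finset (PTree × PTree)) : ℝ :=
  (((planeTrees n) ×ˢ (planeTrees n)).filter
      fun p => (normalize p.1, normalize p.2) ∈ S).card / ((planeTrees n).card ^ 2 : ℝ)

/-- The total variation distance between `nuT` and `nuP`. -/
noncomputable def tvDist (n : ℕ) : ℝ :=
  ((binTrees n ×ˢ binTrees n).powerset).sup' (Finset.powerset_nonempty _)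
    fun S => |nuT n S - nuP n S|

/-- The number of occurrences of (trees isomorphic to) `B` as a fringe subtree of `T`. -/
def occ (B : PTree) : PTree → ℕ
  | leaf => if normalize leaf = normalize B then 1 else 0
  | node l r => (if normalize (node l r) = normalize B then 1 else 0) + occ B l + occ B r

/-- The number of generators of the automorphism group of `T`: the number of internal
vertices whose two branches are isomorphic. -/
def gens : PTree → ℕ
  | leaf => 0
  | node l r => (if normalize l = normalize r then 1 else 0) + gens l + gens r

/-- `T` has a root branch isomorphic to `B`. -/
def hasBranch (B : PTree) : PTree → Prop
  | leaf => False
  | node l r => normalize l = normalize B ∨ normalize r = normalize B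

/-- The cherries of a plane binary tree whose leaves are numbered from `k` on
(left to right), as pairs of leaf positions. -/
def cherryList : PTree → ℕ → List (ℕ × ℕ)
  | leaf, _ => []
  | node leaf leaf, k => [(k, k + 1)]
  | node l r, k => cherryList l k ++ cherryList r (k + l.size)

/-- The number of matched cherries: cherries of `T` whose two leaves are matched by `L`
to the two leaves of a cherry of `S`. -/
def matchedCherries (T S : PTree) (L : List ℕ) : ℕ :=
  (cherryList T 0).countP fun p =>
    (cherryList S 0).any fun q =>
      (L.getD p.1 0 == q.1 && L.getD p.2 0 == q.2) ||
      (L.getD p.1 0 == q.2 && L.getD p.2 0 == q.1)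

/-- The number of automorphisms of the tanglegram represented by the triple `(T, L, S)`:
pairs of automorphisms of the two trees compatible with the matching `L`. -/
def tangleAutCount (T S : PTree) (L : List ℕ) : ℕ :=
  ((isoFuns T T).map fun a =>
    (isoFuns S S).countP fun b =>
      (List.range T.size).all fun i => L.getD (a i) 0 == b (L.getD i 0)).sum

/-- The number of automorphisms of `T` whose cycle type is `μ(s) = 2^s 1^(n-2s)`,
i.e. involutions of the leaves moving exactly `2 s` leaves. -/
def autMuCount (T : PTree) (s : ℕ) : ℕ :=
  (isoFuns T T).countP fun f =>
    ((List.range T.size).all fun i => f (f i) == i) &&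
    ((List.range T.size).countP fun i => !(f i == i)) == 2 * s

end PTree

section AuxCore
open Finset Equiv
open scoped Classical

variable {n : ℕ}


lemma card_perm_fixing (s : Finset (Fin n)) :
    (Finset.univ.filter (fun σ : Equiv.Perm (Fin n) => ∀ x ∈ s, σ x = x)).card
      = Nat.factorial (n - s.card) := by
  have e := Equiv.Perm.subtypeEquivSubtypePerm (fun x : Fin n => x ∉ s)
  have hcard : Fintype.card {f : Equiv.Perm (Fin n) // ∀ a, ¬ (a ∉ s) → f a = a}
      = Nat.factorial (n - s.card) := by
    rw [← Fintype.card_congr e, Fintype.card_perm]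
    congr 1
    rw [Fintype.card_subtype]
    have : (Finset.univ.filter (fun x : Fin n => x ∉ s)).card = n - s.card := by
      rw [Finset.filter_not, Finset.card_sdiff_of_subset (by simp [Finset.subset_univ]),
        Finset.card_univ, Fintype.card_fin]
      congr 1
      simp [Finset.filter_mem_eq_inter]
    simpa using this
  rw [← hcard, Fintype.card_subtype]
  congr 1
  ext σ
  simp only [Finset.mem_filter, Finset.mem_univ, true_and]
  constructor
  · intro h a ha
    exact h a (not_not.mp ha)
  · intro h x hx
    exact h x (not_not_intro hx)

lemma exists_perm_extend (s : Finset (Fin n)) (f : Fin n → Fin n)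
    (hf : Set.InjOn f s) : ∃ σ : Equiv.Perm (Fin n), ∀ x ∈ s, σ x = f x := by
  classical
  set t := s.image f with ht
  have hcards : sᶜ.card = tᶜ.card := by
    rw [Finset.card_compl, Finset.card_compl, Finset.card_image_of_injOn hf]
  have e : (sᶜ : Finset (Fin n)) ≃ (tᶜ : Finset (Fin n)) := Finset.equivOfCardEq hcards
  set g : Fin n → Fin n := fun x =>
    if h : x ∈ s then f x else (e ⟨x, Finset.mem_compl.mpr h⟩ : Fin n) with hg
  have hginj : Function.Injective g := by
    intro x y hxy
    simp only [hg] at hxy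
    by_cases hx : x ∈ s <;> by_cases hy : y ∈ s
    · rw [dif_pos hx, dif_pos hy] at hxy
      exact hf hx hy hxy
    · rw [dif_pos hx, dif_neg hy] at hxy
      exact absurd (hxy ▸ Finset.mem_image_of_mem f hx)
        (Finset.mem_compl.mp (e ⟨y, Finset.mem_compl.mpr hy⟩).2)
    · rw [dif_neg hx, dif_pos hy] at hxy
      exact absurd (hxy.symm ▸ Finset.mem_image_of_mem f hy)
        (Finset.mem_compl.mp (e ⟨x, Finset.mem_compl.mpr hx⟩).2)
    · rw [dif_neg hx, dif_neg hy] at hxy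
      have := e.injective (Subtype.ext hxy)
      exact Subtype.ext_iff.mp this
  refine ⟨Equiv.ofBijective g (Finite.injective_iff_bijective.mp hginj), fun x hx => ?_⟩
  simp [Equiv.ofBijective, hg, dif_pos hx]

lemma card_perm_prescribed (s : Finset (Fin n)) (f : Fin n → Fin n)
    (hf : Set.InjOn f s) :
    (Finset.univ.filter (fun σ : Equiv.Perm (Fin n) => ∀ x ∈ s, σ x = f x)).card
      = Nat.factorial (n - s.card) := by
  obtain ⟨σ₀, hσ₀⟩ := exists_perm_extend s f hf
  rw [← card_perm_fixing s]
  apply Finset.card_nbij' (fun σ => σ₀⁻¹ * σ) (fun τ => σ₀ * τ)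
  · intro σ hσ
    simp only [Finset.mem_coe, Finset.mem_filter, Finset.mem_univ, true_and] at hσ ⊢
    intro x hx
    simp [Equiv.Perm.mul_apply, hσ x hx, ← hσ₀ x hx]
  · intro τ hτ
    simp only [Finset.mem_coe, Finset.mem_filter, Finset.mem_univ, true_and] at hτ ⊢
    intro x hx
    simp [Equiv.Perm.mul_apply, hτ x hx, hσ₀ x hx]
  · intro σ _; simp [mul_assoc]
  · intro τ _; simp [mul_assoc]


/-- a "good" cherry system: coordinates distinct, pairs pairwise disjoint -/
def GoodSys (C : Finset (Fin n × Fin n)) : Prop :=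
  (∀ p ∈ C, p.1 ≠ p.2) ∧
  ∀ p ∈ C, ∀ q ∈ C, p ≠ q → p.1 ≠ q.1 ∧ p.1 ≠ q.2 ∧ p.2 ≠ q.1 ∧ p.2 ≠ q.2

def MatchedP (C₂ : Finset (Fin n × Fin n)) (σ : Equiv.Perm (Fin n))
    (p : Fin n × Fin n) : Prop :=
  ∃ q ∈ C₂, (σ p.1 = q.1 ∧ σ p.2 = q.2) ∨ (σ p.1 = q.2 ∧ σ p.2 = q.1)

lemma goodSys_pts_card {S : Finset (Fin n × Fin n)} (hS : GoodSys S) :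
    (S.biUnion fun p => {p.1, p.2}).card = 2 * S.card := by
  rw [Finset.card_biUnion]
  · rw [Finset.sum_congr rfl (fun p hp => by
        rw [Finset.card_insert_of_notMem (by simp [hS.1 p hp]), Finset.card_singleton]),
      Finset.sum_const, smul_eq_mul, mul_comm]
  · intro p hp q hq hpq
    obtain ⟨h1, h2, h3, h4⟩ := hS.2 p hp q hq hpq
    simp only [Finset.disjoint_insert_left, Finset.disjoint_singleton,
      Finset.mem_insert, Finset.mem_singleton, Finset.disjoint_singleton_left]
    tauto

lemma goodSys_two_mul_card_le {S : Finset (Fin n × Fin n)} (hS : GoodSys S) :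
    2 * S.card ≤ n := by
  calc 2 * S.card = (S.biUnion fun p => {p.1, p.2}).card := (goodSys_pts_card hS).symm
  _ ≤ Fintype.card (Fin n) := Finset.card_le_univ _
  _ = n := Fintype.card_fin n

lemma touch_unique {C : Finset (Fin n × Fin n)} (hC : GoodSys C) {x : Fin n}
    {q q' : Fin n × Fin n} (hq : q ∈ C) (hq' : q' ∈ C)
    (h : x = q.1 ∨ x = q.2) (h' : x = q'.1 ∨ x = q'.2) : q = q' := by
  by_contra hne
  obtain ⟨a, b, c, d⟩ := hC.2 q hq q' hq' hne
  rcases h with h | h <;> rcases h' with h' | h' <;> subst h <;> simp_all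

noncomputable def clF (C₂ S : Finset (Fin n × Fin n)) (σ : Equiv.Perm (Fin n)) :
    {p // p ∈ S} → (Fin n × Fin n) × Bool := fun p =>
  if h : MatchedP C₂ σ p.1 then (h.choose, decide (σ (p.1).1 = h.choose.1)) else (p.1, false)

def GoodD (C₂ S : Finset (Fin n × Fin n)) (d : {p // p ∈ S} → (Fin n × Fin n) × Bool) : Prop :=
  (∀ p, (d p).1 ∈ C₂) ∧ Function.Injective fun p => (d p).1

noncomputable def vfst {S : Finset (Fin n × Fin n)} (d : {p // p ∈ S} → (Fin n × Fin n) × Bool) (p : {p // p ∈ S}) : Fin n :=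
  if (d p).2 then (d p).1.1 else (d p).1.2

noncomputable def vsnd {S : Finset (Fin n × Fin n)} (d : {p // p ∈ S} → (Fin n × Fin n) × Bool) (p : {p // p ∈ S}) : Fin n :=
  if (d p).2 then (d p).1.2 else (d p).1.1

lemma hspec_clF {C₂ S : Finset (Fin n × Fin n)} (hC₂ : GoodSys C₂)
    {d : {p // p ∈ S} → (Fin n × Fin n) × Bool}
    (σ : Equiv.Perm (Fin n)) (hA : ∀ p ∈ S, MatchedP C₂ σ p) (hcl : clF C₂ S σ = d)
    (p : {p // p ∈ S}) : (d p).1 ∈ C₂ ∧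
      ((σ (p.1).1 = (d p).1.1 ∧ σ (p.1).2 = (d p).1.2 ∧ (d p).2 = true) ∨
       (σ (p.1).1 = (d p).1.2 ∧ σ (p.1).2 = (d p).1.1 ∧ (d p).2 = false)) := by
  have h : MatchedP C₂ σ p.1 := hA p.1 p.2
  have hd : d p = (h.choose, decide (σ (p.1).1 = h.choose.1)) := by
    rw [← hcl]; simp only [clF, dif_pos h]
  obtain ⟨hqmem, hcase⟩ := h.choose_spec
  rcases hcase with ⟨h1, h2⟩ | ⟨h1, h2⟩
  · exact ⟨by rw [hd]; exact hqmem,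
      Or.inl (by rw [hd]; exact ⟨h1, h2, decide_eq_true h1⟩)⟩
  · have hne : h.choose.2 ≠ h.choose.1 := (hC₂.1 _ hqmem).symm
    exact ⟨by rw [hd]; exact hqmem,
      Or.inr (by rw [hd]; exact ⟨h1, h2, decide_eq_false (fun e => hne (h1.symm.trans e))⟩)⟩

lemma vfst_or {S : Finset (Fin n × Fin n)} (d : {p // p ∈ S} → (Fin n × Fin n) × Bool)
    (p : {p // p ∈ S}) :
    (vfst d p = (d p).1.1 ∨ vfst d p = (d p).1.2) ∧
    (vsnd d p = (d p).1.1 ∨ vsnd d p = (d p).1.2) := by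
  unfold vfst vsnd
  cases hb : (d p).2 <;> simp

lemma card_fiber (C₂ S : Finset (Fin n × Fin n)) (hC₂ : GoodSys C₂) (hS : GoodSys S)
    (d : {p // p ∈ S} → (Fin n × Fin n) × Bool) :
    ((Finset.univ.filter fun σ : Equiv.Perm (Fin n) => ∀ p ∈ S, MatchedP C₂ σ p).filter
        (fun σ => clF C₂ S σ = d)).card
      = if GoodD C₂ S d then Nat.factorial (n - 2 * S.card) else 0 := by
  classical
  have huniqS : ∀ (p p' : {p // p ∈ S}) (x : Fin n),
      (x = (p.1).1 ∨ x = (p.1).2) → (x = (p'.1).1 ∨ x = (p'.1).2) → p = p' :=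
    fun p p' x h h' => Subtype.ext (touch_unique hS p.2 p'.2 h h')
  set pts : Finset (Fin n) := S.biUnion fun p => {p.1, p.2} with hpts
  have hpts_mem : ∀ x : Fin n, x ∈ pts ↔ ∃ p : {p // p ∈ S}, x = (p.1).1 ∨ x = (p.1).2 := by
    intro x
    simp only [hpts, Finset.mem_biUnion, Finset.mem_insert, Finset.mem_singleton]
    constructor
    · rintro ⟨p, hp, h⟩; exact ⟨⟨p, hp⟩, h⟩
    · rintro ⟨p, h⟩; exact ⟨p.1, p.2, h⟩
  by_cases hgood : GoodD C₂ S d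
  · rw [if_pos hgood]
    set f : Fin n → Fin n := fun x =>
      if h : ∃ p : {p // p ∈ S}, x = (p.1).1 ∨ x = (p.1).2 then
        (if x = ((h.choose).1).1 then vfst d h.choose else vsnd d h.choose) else x with hf
    have hfval : ∀ (p : {p // p ∈ S}) (x : Fin n), (x = (p.1).1 ∨ x = (p.1).2) →
        f x = if x = (p.1).1 then vfst d p else vsnd d p := by
      intro p x hx
      have hex : ∃ p : {p // p ∈ S}, x = (p.1).1 ∨ x = (p.1).2 := ⟨p, hx⟩
      have heq : hex.choose = p := huniqS _ _ x hex.choose_spec hx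
      simp only [hf]
      rw [dif_pos hex, heq]
    have hset : ((Finset.univ.filter fun σ : Equiv.Perm (Fin n) =>
          ∀ p ∈ S, MatchedP C₂ σ p).filter (fun σ => clF C₂ S σ = d))
        = Finset.univ.filter (fun σ : Equiv.Perm (Fin n) => ∀ x ∈ pts, σ x = f x) := by
      ext σ
      simp only [Finset.mem_filter, Finset.mem_univ, true_and]
      constructor
      · rintro ⟨hA, hcl⟩ x hx
        obtain ⟨p, hp⟩ := (hpts_mem x).1 hx
        rw [hfval p x hp]
        have hsp := hspec_clF hC₂ σ hA hcl p
        rcases hp with hp | hp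
        · subst hp
          rw [if_pos rfl]
          unfold vfst
          rcases hsp.2 with ⟨h1, h2, hb⟩ | ⟨h1, h2, hb⟩ <;> rw [hb]
          · rw [if_pos rfl]; exact h1
          · rw [if_neg Bool.false_ne_true]; exact h1
        · subst hp
          rw [if_neg (fun e => hS.1 p.1 p.2 e.symm)]
          unfold vsnd
          rcases hsp.2 with ⟨h1, h2, hb⟩ | ⟨h1, h2, hb⟩ <;> rw [hb]
          · rw [if_pos rfl]; exact h2
          · rw [if_neg Bool.false_ne_true]; exact h2
      · intro hσ
        have hvals : ∀ p : {p // p ∈ S}, σ (p.1).1 = vfst d p ∧ σ (p.1).2 = vsnd d p := by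
          intro p
          constructor
          · rw [hσ _ ((hpts_mem _).2 ⟨p, Or.inl rfl⟩), hfval p _ (Or.inl rfl), if_pos rfl]
          · rw [hσ _ ((hpts_mem _).2 ⟨p, Or.inr rfl⟩), hfval p _ (Or.inr rfl),
              if_neg (fun e => hS.1 p.1 p.2 e.symm)]
        have hA : ∀ p ∈ S, MatchedP C₂ σ p := by
          intro p hp
          obtain ⟨h1, h2⟩ := hvals ⟨p, hp⟩
          refine ⟨(d ⟨p, hp⟩).1, hgood.1 _, ?_⟩
          unfold vfst at h1
          unfold vsnd at h2
          cases hb : (d ⟨p, hp⟩).2 <;> rw [hb] at h1 h2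
          · rw [if_neg Bool.false_ne_true] at h1 h2
            exact Or.inr ⟨h1, h2⟩
          · rw [if_pos rfl] at h1 h2
            exact Or.inl ⟨h1, h2⟩
        refine ⟨hA, ?_⟩
        funext p
        have h : MatchedP C₂ σ p.1 := hA p.1 p.2
        obtain ⟨h1, h2⟩ := hvals p
        obtain ⟨hq'mem, hcase'⟩ := h.choose_spec
        have hq : h.choose = (d p).1 := by
          refine touch_unique hC₂ hq'mem (hgood.1 p) (x := σ (p.1).1) ?_ ?_
          · rcases hcase' with ⟨ha, _⟩ | ⟨ha, _⟩
            · exact Or.inl ha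
            · exact Or.inr ha
          · rw [h1]; exact (vfst_or d p).1
        simp only [clF, dif_pos h]
        have hcne : (d p).1.1 ≠ (d p).1.2 := hC₂.1 _ (hgood.1 p)
        refine Prod.ext (by rw [hq]) ?_
        rw [hq, h1]
        unfold vfst
        cases hb : (d p).2
        · rw [if_neg Bool.false_ne_true]
          exact decide_eq_false (fun e => hcne e.symm)
        · rw [if_pos rfl]
          exact decide_eq_true rfl
    rw [hset]
    have hdiff : ∀ p : {p // p ∈ S}, vfst d p ≠ vsnd d p := by
      intro p
      have hx := hC₂.1 _ (hgood.1 p)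
      unfold vfst vsnd
      cases hb : (d p).2
      · rw [if_neg Bool.false_ne_true, if_neg Bool.false_ne_true]
        exact hx.symm
      · rw [if_pos rfl, if_pos rfl]
        exact hx
    have hinj : Set.InjOn f pts := by
      intro x hx y hy hxy
      obtain ⟨px, hpx⟩ := (hpts_mem x).1 hx
      obtain ⟨py, hpy⟩ := (hpts_mem y).1 hy
      rw [hfval px x hpx, hfval py y hpy] at hxy
      by_cases hpxy : px = py
      · subst hpxy
        rcases hpx with hpx | hpx <;> rcases hpy with hpy | hpy <;> subst hpx <;> subst hpy
        · rfl
        · rw [if_pos rfl, if_neg (fun e => hS.1 px.1 px.2 e.symm)] at hxy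
          exact absurd hxy (hdiff px)
        · rw [if_neg (fun e => hS.1 px.1 px.2 e.symm), if_pos rfl] at hxy
          exact absurd hxy.symm (hdiff px)
        · rfl
      · exfalso
        have hqne : (d px).1 ≠ (d py).1 := fun e => hpxy (hgood.2 e)
        obtain ⟨e1, e2, e3, e4⟩ := hC₂.2 _ (hgood.1 px) _ (hgood.1 py) hqne
        have hmx : (if x = (px.1).1 then vfst d px else vsnd d px) = (d px).1.1 ∨
            (if x = (px.1).1 then vfst d px else vsnd d px) = (d px).1.2 := by
          by_cases hc : x = (px.1).1
          · rw [if_pos hc]; exact (vfst_or d px).1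
          · rw [if_neg hc]; exact (vfst_or d px).2
        have hmy : (if y = (py.1).1 then vfst d py else vsnd d py) = (d py).1.1 ∨
            (if y = (py.1).1 then vfst d py else vsnd d py) = (d py).1.2 := by
          by_cases hc : y = (py.1).1
          · rw [if_pos hc]; exact (vfst_or d py).1
          · rw [if_neg hc]; exact (vfst_or d py).2
        rw [hxy] at hmx
        rcases hmx with h | h <;> rcases hmy with h' | h'
        · exact e1 (h.symm.trans h')
        · exact e2 (h.symm.trans h')
        · exact e3 (h.symm.trans h')
        · exact e4 (h.symm.trans h')
    rw [card_perm_prescribed pts f hinj, goodSys_pts_card hS]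
  · rw [if_neg hgood, Finset.card_eq_zero, Finset.eq_empty_iff_forall_notMem]
    intro σ hmem
    simp only [Finset.mem_filter, Finset.mem_univ, true_and] at hmem
    obtain ⟨hA, hcl⟩ := hmem
    refine hgood ⟨fun p => (hspec_clF hC₂ σ hA hcl p).1, ?_⟩
    intro p p' he0
    have he : (d p).1 = (d p').1 := he0
    by_contra hne
    have hPP := hS.2 p.1 p.2 p'.1 p'.2 (fun e => hne (Subtype.ext e))
    rcases (hspec_clF hC₂ σ hA hcl p).2 with ⟨h1, h2, _⟩ | ⟨h1, h2, _⟩ <;>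
      rcases (hspec_clF hC₂ σ hA hcl p').2 with ⟨h1', h2', _⟩ | ⟨h1', h2', _⟩
    · exact hPP.1 (σ.injective (h1.trans (by rw [he]; exact h1'.symm)))
    · exact hPP.2.1 (σ.injective (h1.trans (by rw [he]; exact h2'.symm)))
    · exact hPP.2.1 (σ.injective (h1.trans (by rw [he]; exact h2'.symm)))
    · exact hPP.1 (σ.injective (h1.trans (by rw [he]; exact h1'.symm)))

lemma card_goodD (C₂ S : Finset (Fin n × Fin n)) :
    ((Finset.univ : Finset ({p // p ∈ S} → (Fin n × Fin n) × Bool)).filter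
        (GoodD C₂ S)).card = C₂.card.descFactorial S.card * 2 ^ S.card := by
  classical
  have e : {d : {p // p ∈ S} → (Fin n × Fin n) × Bool // GoodD C₂ S d} ≃
      ({p // p ∈ S} ↪ {q // q ∈ C₂}) × ({p // p ∈ S} → Bool) :=
    { toFun := fun d =>
        (⟨fun p => ⟨(d.1 p).1, d.2.1 p⟩, fun p p' h => d.2.2 (Subtype.ext_iff.mp h)⟩,
          fun p => (d.1 p).2)
      invFun := fun eb =>
        ⟨fun p => ((eb.1 p : Fin n × Fin n), eb.2 p),
          ⟨fun p => (eb.1 p).2, fun p p' h => eb.1.injective (Subtype.ext h)⟩⟩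
      left_inv := fun d => by
        apply Subtype.ext
        funext p
        rfl
      right_inv := fun eb => by
        refine Prod.ext ?_ rfl
        apply Function.Embedding.ext
        intro p
        rfl }
  rw [← Fintype.card_subtype, Fintype.card_congr e, Fintype.card_prod,
    Fintype.card_embedding_eq, Fintype.card_coe, Fintype.card_coe, Fintype.card_fun,
    Fintype.card_bool, Fintype.card_coe]

lemma card_allMatched (C₂ S : Finset (Fin n × Fin n)) (hC₂ : GoodSys C₂) (hS : GoodSys S) :
    (Finset.univ.filter fun σ : Equiv.Perm (Fin n) => ∀ p ∈ S, MatchedP C₂ σ p).card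
      = C₂.card.descFactorial S.card * 2 ^ S.card * Nat.factorial (n - 2 * S.card) := by
  classical
  rw [Finset.card_eq_sum_card_fiberwise
    (f := clF C₂ S) (t := (Finset.univ : Finset ({p // p ∈ S} → (Fin n × Fin n) × Bool)))
    (fun x _ => Finset.mem_univ _)]
  rw [Finset.sum_congr rfl (fun d _ => card_fiber C₂ S hC₂ hS d)]
  rw [Finset.sum_ite, Finset.sum_const, Finset.sum_const_zero, add_zero, smul_eq_mul,
    card_goodD C₂ S]

lemma goodSys_mono {S C : Finset (Fin n × Fin n)} (h : S ⊆ C) (hC : GoodSys C) :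
    GoodSys S :=
  ⟨fun p hp => hC.1 p (h hp), fun p hp q hq => hC.2 p (h hp) q (h hq)⟩

lemma sum_choose_matched (C₁ C₂ : Finset (Fin n × Fin n)) (hC₁ : GoodSys C₁)
    (hC₂ : GoodSys C₂) (j : ℕ) :
    ∑ σ : Equiv.Perm (Fin n), ((C₁.filter (MatchedP C₂ σ)).card.choose j)
      = C₁.card.choose j * (C₂.card.descFactorial j * 2 ^ j * Nat.factorial (n - 2 * j)) := by
  classical
  have step1 : ∀ σ : Equiv.Perm (Fin n),
      (C₁.filter (MatchedP C₂ σ)).card.choose j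
        = ((C₁.powersetCard j).filter (fun S => ∀ p ∈ S, MatchedP C₂ σ p)).card := by
    intro σ
    rw [← Finset.card_powersetCard]
    congr 1
    ext S
    simp only [Finset.mem_powersetCard, Finset.mem_filter]
    constructor
    · rintro ⟨hsub, hcard⟩
      exact ⟨⟨hsub.trans (Finset.filter_subset _ _), hcard⟩,
        fun p hp => (Finset.mem_filter.mp (hsub hp)).2⟩
    · rintro ⟨⟨hsub, hcard⟩, hall⟩
      exact ⟨fun p hp => Finset.mem_filter.mpr ⟨hsub hp, hall p hp⟩, hcard⟩
  rw [Finset.sum_congr rfl (fun σ _ => step1 σ)]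
  calc ∑ σ : Equiv.Perm (Fin n),
        ((C₁.powersetCard j).filter (fun S => ∀ p ∈ S, MatchedP C₂ σ p)).card
      = ∑ σ : Equiv.Perm (Fin n), ∑ S ∈ C₁.powersetCard j,
          if (∀ p ∈ S, MatchedP C₂ σ p) then 1 else 0 := by
        exact Finset.sum_congr rfl fun σ _ => Finset.card_filter _ _
    _ = ∑ S ∈ C₁.powersetCard j, ∑ σ : Equiv.Perm (Fin n),
          if (∀ p ∈ S, MatchedP C₂ σ p) then 1 else 0 := Finset.sum_comm
    _ = ∑ S ∈ C₁.powersetCard j,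
          (Finset.univ.filter fun σ : Equiv.Perm (Fin n) => ∀ p ∈ S, MatchedP C₂ σ p).card := by
        exact Finset.sum_congr rfl fun S _ => (Finset.card_filter _ _).symm
    _ = ∑ _S ∈ C₁.powersetCard j, C₂.card.descFactorial j * 2 ^ j
          * Nat.factorial (n - 2 * j) := by
        refine Finset.sum_congr rfl fun S hS => ?_
        obtain ⟨hsub, hcard⟩ := Finset.mem_powersetCard.mp hS
        rw [card_allMatched C₂ S hC₂ (goodSys_mono hsub hC₁), hcard]
    _ = C₁.card.choose j * (C₂.card.descFactorial j * 2 ^ j * Nat.factorial (n - 2 * j)) := by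
        rw [Finset.sum_const, Finset.card_powersetCard, smul_eq_mul, mul_assoc]

lemma delta_sum (m k N : ℕ) (hm : m ≤ N) :
    ∑ j ∈ Finset.range (N + 1), (-1 : ℤ) ^ (j + k) * (j.choose k : ℤ) * (m.choose j : ℤ)
      = if m = k then 1 else 0 := by
  by_cases hk : k ≤ m
  · have hsub : Finset.Ico k (m + 1) ⊆ Finset.range (N + 1) := by
      intro j hj
      simp only [Finset.mem_Ico] at hj
      simp only [Finset.mem_range]
      omega
    rw [← Finset.sum_subset hsub (fun j hj hj' => ?_)]
    · rw [Finset.sum_Ico_eq_sum_range]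
      have hrw : ∀ i ∈ Finset.range (m + 1 - k),
          (-1 : ℤ) ^ (k + i + k) * ((k + i).choose k : ℤ) * (m.choose (k + i) : ℤ)
            = ((m.choose k : ℤ)) * ((-1 : ℤ) ^ i * ((m - k).choose i : ℤ)) := by
        intro i hi
        have hile : k + i ≤ m := by
          simp only [Finset.mem_range] at hi; omega
        have hc : (m.choose (k + i)) * ((k + i).choose k) =
            m.choose k * (m - k).choose i := by
          have := Nat.choose_mul (n := m) (Nat.le_add_right k i)
          rwa [Nat.add_sub_cancel_left] at this
        have hsign : (-1 : ℤ) ^ (k + i + k) = (-1 : ℤ) ^ i := by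
          rw [show k + i + k = 2 * k + i by ring, pow_add, pow_mul]
          norm_num
        rw [hsign]
        have hc' : ((m.choose (k + i)) : ℤ) * (((k + i).choose k) : ℤ)
            = (m.choose k : ℤ) * ((m - k).choose i : ℤ) := by exact_mod_cast hc
        linear_combination ((-1 : ℤ) ^ i) * hc'
      rw [Finset.sum_congr rfl hrw, ← Finset.mul_sum,
        show m + 1 - k = (m - k) + 1 by omega, Int.alternating_sum_range_choose]
      by_cases hmk : m = k
      · rw [if_pos (by omega), if_pos hmk, hmk, Nat.choose_self]
        norm_num
      · rw [if_neg (by omega), if_neg hmk, mul_zero]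
    · simp only [Finset.mem_Ico, not_and, not_lt] at hj'
      rcases lt_or_ge j k with h | h
      · rw [Nat.choose_eq_zero_of_lt h]
        push_cast; ring
      · have : m < j := by have := hj' h; omega
        rw [Nat.choose_eq_zero_of_lt this]
        push_cast; ring
  · rw [if_neg (by omega)]
    apply Finset.sum_eq_zero
    intro j _
    rcases lt_or_ge j k with h | h
    · rw [Nat.choose_eq_zero_of_lt h]; push_cast; ring
    · have : m < j := by omega
      rw [Nat.choose_eq_zero_of_lt this]; push_cast; ring

lemma choose_mul_all (c k l : ℕ) :
    c.choose (k + l) * (k + l).choose k = c.choose k * (c - k).choose l := by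
  by_cases h : k + l ≤ c
  · have := Nat.choose_mul (n := c) (Nat.le_add_right k l)
    rwa [Nat.add_sub_cancel_left] at this
  · have h1 : c < k + l := lt_of_not_ge h
    rw [Nat.choose_eq_zero_of_lt h1, zero_mul]
    by_cases h2 : k ≤ c
    · rw [Nat.choose_eq_zero_of_lt (by omega : c - k < l), mul_zero]
    · rw [Nat.choose_eq_zero_of_lt (by omega), zero_mul]

lemma card_exact_matched (C₁ C₂ : Finset (Fin n × Fin n)) (hC₁ : GoodSys C₁)
    (hC₂ : GoodSys C₂) (k : ℕ) :
    ((Finset.univ.filter fun σ : Equiv.Perm (Fin n) =>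
        (C₁.filter (MatchedP C₂ σ)).card = k).card : ℤ)
      = (C₁.card.choose k : ℤ) * (C₂.card.choose k : ℤ) * (Nat.factorial k : ℤ) * 2 ^ k *
        ∑ l ∈ Finset.range (n + 1),
          (-1 : ℤ) ^ l * ((C₁.card - k).choose l : ℤ) * ((C₂.card - k).choose l : ℤ)
            * (Nat.factorial l : ℤ) * 2 ^ l * (Nat.factorial (n - 2 * k - 2 * l) : ℤ) := by
  classical
  set c₁ := C₁.card with hc1
  set c₂ := C₂.card with hc2
  have hc1n : c₁ ≤ n := by have := goodSys_two_mul_card_le hC₁; omega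
  have hc2n : c₂ ≤ n := by have := goodSys_two_mul_card_le hC₂; omega
  have hmle : ∀ σ : Equiv.Perm (Fin n), (C₁.filter (MatchedP C₂ σ)).card ≤ n :=
    fun σ => le_trans (Finset.card_le_card (Finset.filter_subset _ _)) hc1n
  -- Step 1: LHS as alternating double sum
  have step1 : ((Finset.univ.filter fun σ : Equiv.Perm (Fin n) =>
        (C₁.filter (MatchedP C₂ σ)).card = k).card : ℤ)
      = ∑ j ∈ Finset.range (n + 1), (-1 : ℤ) ^ (j + k) * (j.choose k : ℤ) *
          ((c₁.choose j : ℤ) * ((c₂.descFactorial j : ℤ) * 2 ^ j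
            * (Nat.factorial (n - 2 * j) : ℤ))) := by
    rw [Finset.card_filter]
    push_cast
    calc (∑ σ : Equiv.Perm (Fin n),
          if (C₁.filter (MatchedP C₂ σ)).card = k then (1 : ℤ) else 0)
        = ∑ σ : Equiv.Perm (Fin n), ∑ j ∈ Finset.range (n + 1),
            (-1 : ℤ) ^ (j + k) * (j.choose k : ℤ)
              * (((C₁.filter (MatchedP C₂ σ)).card.choose j : ℤ)) := by
          exact Finset.sum_congr rfl fun σ _ => (delta_sum _ k n (hmle σ)).symm
      _ = ∑ j ∈ Finset.range (n + 1), ∑ σ : Equiv.Perm (Fin n),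
            (-1 : ℤ) ^ (j + k) * (j.choose k : ℤ)
              * (((C₁.filter (MatchedP C₂ σ)).card.choose j : ℤ)) := Finset.sum_comm
      _ = ∑ j ∈ Finset.range (n + 1), (-1 : ℤ) ^ (j + k) * (j.choose k : ℤ) *
            ((c₁.choose j : ℤ) * ((c₂.descFactorial j : ℤ) * 2 ^ j
              * (Nat.factorial (n - 2 * j) : ℤ))) := by
          refine Finset.sum_congr rfl fun j _ => ?_
          rw [← Finset.mul_sum]
          congr 1
          have h0 := sum_choose_matched C₁ C₂ hC₁ hC₂ j
          calc (∑ σ : Equiv.Perm (Fin n),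
                (((C₁.filter (MatchedP C₂ σ)).card.choose j : ℤ)))
              = ((∑ σ : Equiv.Perm (Fin n),
                  ((C₁.filter (MatchedP C₂ σ)).card.choose j) : ℕ) : ℤ) := by
                push_cast
                rfl
            _ = _ := by
                rw [h0]
                push_cast
                ring
  rw [step1]
  -- now case analysis
  by_cases hk : k ≤ c₁ ∧ k ≤ c₂
  · obtain ⟨hk1, hk2⟩ := hk
    have hkn : k ≤ n := le_trans hk1 hc1n
    -- LHS: terms with j < k vanish; reindex
    have hsub : Finset.Ico k (n + 1) ⊆ Finset.range (n + 1) := by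
      intro j hj; simp only [Finset.mem_Ico] at hj; simp only [Finset.mem_range]; omega
    rw [← Finset.sum_subset hsub (fun j _ hj' => by
      simp only [Finset.mem_Ico, not_and, not_lt] at hj'
      have hjk : j < k := by
        by_contra h
        have := hj' (by omega)
        simp only [Finset.mem_range] at *
        omega
      rw [Nat.choose_eq_zero_of_lt hjk]
      push_cast; ring)]
    rw [Finset.sum_Ico_eq_sum_range]
    -- RHS: restrict inner sum
    have hsub2 : Finset.range (n + 1 - k) ⊆ Finset.range (n + 1) := by
      intro l hl; simp only [Finset.mem_range] at *; omega
    rw [← Finset.sum_subset hsub2 (fun l hl hl' => by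
      simp only [Finset.mem_range, not_lt] at hl hl'
      have : c₁ - k < l := by omega
      rw [Nat.choose_eq_zero_of_lt this]
      push_cast; ring)]
    rw [Finset.mul_sum]
    refine Finset.sum_congr rfl fun l _ => ?_
    -- termwise identity
    have e1 : ((c₁.choose (k + l) : ℤ)) * (((k + l).choose k : ℤ))
        = (c₁.choose k : ℤ) * ((c₁ - k).choose l : ℤ) := by
      exact_mod_cast congrArg (Nat.cast (R := ℤ)) (choose_mul_all c₁ k l)
    have e2 : ((c₂.choose (k + l) : ℤ)) * (((k + l).choose k : ℤ))
        = (c₂.choose k : ℤ) * ((c₂ - k).choose l : ℤ) := by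
      exact_mod_cast congrArg (Nat.cast (R := ℤ)) (choose_mul_all c₂ k l)
    have e3 : ((k + l).factorial : ℤ)
        = ((k + l).choose k : ℤ) * (k.factorial : ℤ) * (l.factorial : ℤ) := by
      have := Nat.choose_mul_factorial_mul_factorial (Nat.le_add_right k l)
      rw [Nat.add_sub_cancel_left] at this
      exact_mod_cast this.symm
    have e4 : (-1 : ℤ) ^ (k + l + k) = (-1 : ℤ) ^ l := by
      rw [show k + l + k = 2 * k + l by ring, pow_add, pow_mul]
      norm_num
    have e5 : n - 2 * (k + l) = n - 2 * k - 2 * l := by omega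
    have e6 : (c₂.descFactorial (k + l) : ℤ) = ((k + l).factorial : ℤ)
        * (c₂.choose (k + l) : ℤ) := by
      exact_mod_cast congrArg (Nat.cast (R := ℤ))
        (Nat.descFactorial_eq_factorial_mul_choose c₂ (k + l))
    have e12 : (((c₁.choose (k + l) : ℤ)) * (((k + l).choose k : ℤ)))
        * (((c₂.choose (k + l) : ℤ)) * (((k + l).choose k : ℤ)))
        = ((c₁.choose k : ℤ) * ((c₁ - k).choose l : ℤ))
        * ((c₂.choose k : ℤ) * ((c₂ - k).choose l : ℤ)) := by
      rw [e1, e2]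
    rw [e4, e5, e6, e3, pow_add]
    linear_combination ((-1 : ℤ) ^ l * (k.factorial : ℤ) * (l.factorial : ℤ)
      * (2 : ℤ) ^ k * (2 : ℤ) ^ l * (Nat.factorial (n - 2 * k - 2 * l) : ℤ)) * e12
  · -- degenerate: k > c₁ or k > c₂, both sides vanish
    have hrhs : (c₁.choose k : ℤ) * (c₂.choose k : ℤ) = 0 := by
      rcases not_and_or.mp hk with h | h
      · rw [Nat.choose_eq_zero_of_lt (by omega)]; ring
      · rw [Nat.choose_eq_zero_of_lt (by omega : c₂ < k)]; ring
    have hlhs : ∀ j ∈ Finset.range (n + 1), (-1 : ℤ) ^ (j + k) * (j.choose k : ℤ) *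
          ((c₁.choose j : ℤ) * ((c₂.descFactorial j : ℤ) * 2 ^ j
            * (Nat.factorial (n - 2 * j) : ℤ))) = 0 := by
      intro j _
      rcases lt_or_ge j k with h | h
      · rw [Nat.choose_eq_zero_of_lt h]; push_cast; ring
      · rcases not_and_or.mp hk with h' | h'
        · rw [Nat.choose_eq_zero_of_lt (by omega : c₁ < j)]; push_cast; ring
        · have : c₂.descFactorial j = 0 :=
            Nat.descFactorial_eq_zero_iff_lt.mpr (by omega)
          rw [this]; push_cast; ring
    rw [Finset.sum_eq_zero hlhs]
    rw [show (c₁.choose k : ℤ) * (c₂.choose k : ℤ) * (Nat.factorial k : ℤ) * 2 ^ k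
      = 0 * (Nat.factorial k : ℤ) * 2 ^ k by rw [hrhs]]
    ring

end AuxCore

section AuxPTree
open PTree
open scoped Classical

lemma PTree.size_pos' (T : PTree) : 1 ≤ T.size := by
  induction T with
  | leaf => simp [PTree.size]
  | node l r ihl ihr => simp only [PTree.size]; omega

lemma PTree.cherrySpec_step {l r : PTree} {m : ℕ}
    (hl : (cherryList l m).length = cherries l ∧
      (∀ p ∈ cherryList l m, p.2 = p.1 + 1 ∧ m ≤ p.1 ∧ p.2 < m + l.size) ∧
      (cherryList l m).Pairwise (fun p q => p.2 < q.1))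
    (hr : (cherryList r (m + l.size)).length = cherries r ∧
      (∀ p ∈ cherryList r (m + l.size), p.2 = p.1 + 1 ∧ m + l.size ≤ p.1 ∧
        p.2 < m + l.size + r.size) ∧
      (cherryList r (m + l.size)).Pairwise (fun p q => p.2 < q.1))
    (heqL : cherryList (PTree.node l r) m = cherryList l m ++ cherryList r (m + l.size))
    (heqC : cherries (PTree.node l r) = cherries l + cherries r) :
    (cherryList (PTree.node l r) m).length = cherries (PTree.node l r) ∧
    (∀ p ∈ cherryList (PTree.node l r) m, p.2 = p.1 + 1 ∧ m ≤ p.1 ∧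
      p.2 < m + (PTree.node l r).size) ∧
    (cherryList (PTree.node l r) m).Pairwise (fun p q => p.2 < q.1) := by
  have hsz : (PTree.node l r).size = l.size + r.size := rfl
  refine ⟨?_, ?_, ?_⟩
  · rw [heqL, List.length_append, hl.1, hr.1, heqC]
  · intro p hp
    rw [heqL, List.mem_append] at hp
    rw [hsz]
    rcases hp with hp | hp
    · obtain ⟨h1, h2, h3⟩ := hl.2.1 p hp
      exact ⟨h1, h2, by omega⟩
    · obtain ⟨h1, h2, h3⟩ := hr.2.1 p hp
      exact ⟨h1, by omega, by omega⟩
  · rw [heqL, List.pairwise_append]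
    refine ⟨hl.2.2, hr.2.2, fun p hp q hq => ?_⟩
    have h3 := (hl.2.1 p hp).2.2
    have h2 := (hr.2.1 q hq).2.1
    omega

lemma PTree.cherrySpec (T : PTree) (m : ℕ) :
    (cherryList T m).length = cherries T ∧
    (∀ p ∈ cherryList T m, p.2 = p.1 + 1 ∧ m ≤ p.1 ∧ p.2 < m + T.size) ∧
    (cherryList T m).Pairwise (fun p q => p.2 < q.1) := by
  induction T generalizing m with
  | leaf => simp [PTree.cherryList, PTree.cherries]
  | node l r ihl ihr =>
    cases l with
    | leaf =>
      cases r with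
      | leaf =>
        refine ⟨rfl, ?_, ?_⟩
        · intro p hp
          have hp' : p = (m, m + 1) := by simpa [PTree.cherryList] using hp
          subst hp'
          refine ⟨rfl, le_refl _, ?_⟩
          show m + 1 < m + (PTree.node PTree.leaf PTree.leaf).size
          have : (PTree.node PTree.leaf PTree.leaf).size = 2 := rfl
          omega
        · show ([(m, m + 1)]).Pairwise _
          exact List.pairwise_singleton _ _
      | node r1 r2 => exact PTree.cherrySpec_step (ihl m) (ihr _) rfl rfl
    | node l1 l2 => exact PTree.cherrySpec_step (ihl m) (ihr _) rfl rfl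

lemma PTree.cherryList_nodup (T : PTree) (m : ℕ) : (cherryList T m).Nodup := by
  have h := PTree.cherrySpec T m
  refine List.Pairwise.imp_of_mem ?_ h.2.2
  intro p q hp hq hlt
  have h1 := (h.2.1 p hp).1
  intro he
  subst he
  omega

end AuxPTree

open Fin.NatCast

open PTree in
/-- The inclusion–exclusion count: the number of perfect matchings between the leaves of
two plane binary trees `B₁, B₂` with `n` leaves and `c₁, c₂` cherries under which exactly
`k` cherries are matched equals
`binom(c₁,k) binom(c₂,k) k! 2^k ∑_ℓ (-1)^ℓ binom(c₁-k,ℓ) binom(c₂-k,ℓ) ℓ! 2^ℓ (n-2k-2ℓ)!`. -/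
theorem count_matchings_with_matched_cherries (n k : ℕ) (B₁ B₂ : PTree)
    (h1 : B₁.size = n) (h2 : B₂.size = n) :
    ((((List.range n).permutations.toFinset).filter
        (fun L => matchedCherries B₁ B₂ L = k)).card : ℤ)
      = (Nat.choose B₁.cherries k : ℤ) * (Nat.choose B₂.cherries k : ℤ)
          * (Nat.factorial k : ℤ) * 2 ^ k *
        ∑ l ∈ Finset.range (n + 1),
          (-1 : ℤ) ^ l * (Nat.choose (B₁.cherries - k) l : ℤ)
            * (Nat.choose (B₂.cherries - k) l : ℤ)
            * (Nat.factorial l : ℤ) * 2 ^ l * (Nat.factorial (n - 2 * k - 2 * l) : ℤ) := by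
  classical
  have hn1 : 1 ≤ n := h1 ▸ PTree.size_pos' B₁
  haveI : NeZero n := ⟨by omega⟩
  obtain ⟨hlen₁, hspec₁, hpw₁⟩ := PTree.cherrySpec B₁ 0
  obtain ⟨hlen₂, hspec₂, hpw₂⟩ := PTree.cherrySpec B₂ 0
  have hnd₁ := PTree.cherryList_nodup B₁ 0
  have hnd₂ := PTree.cherryList_nodup B₂ 0
  set emb : ℕ × ℕ → Fin n × Fin n := fun p => ((p.1 : Fin n), (p.2 : Fin n)) with hemb
  set C₁ : Finset (Fin n × Fin n) := (PTree.cherryList B₁ 0).toFinset.image emb with hC1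
  set C₂ : Finset (Fin n × Fin n) := (PTree.cherryList B₂ 0).toFinset.image emb with hC2
  have hb₁ : ∀ p ∈ PTree.cherryList B₁ 0, p.1 < n ∧ p.2 < n := by
    intro p hp
    obtain ⟨e1, e2, e3⟩ := hspec₁ p hp
    omega
  have hb₂ : ∀ p ∈ PTree.cherryList B₂ 0, p.1 < n ∧ p.2 < n := by
    intro p hp
    obtain ⟨e1, e2, e3⟩ := hspec₂ p hp
    omega
  have mk : ∀ T : PTree, T.size = n →
      GoodSys ((PTree.cherryList T 0).toFinset.image emb) ∧
      ((PTree.cherryList T 0).toFinset.image emb).card = PTree.cherries T := by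
    intro T hT
    obtain ⟨hlen, hspec, hpw⟩ := PTree.cherrySpec T 0
    have hnd := PTree.cherryList_nodup T 0
    have hb : ∀ p ∈ PTree.cherryList T 0, p.1 < n ∧ p.2 < n := by
      intro p hp
      obtain ⟨e1, e2, e3⟩ := hspec p hp
      omega
    have hval : ∀ p ∈ PTree.cherryList T 0,
        ((p.1 : Fin n) : ℕ) = p.1 ∧ ((p.2 : Fin n) : ℕ) = p.2 := by
      intro p hp
      exact ⟨Fin.val_cast_of_lt (hb p hp).1, Fin.val_cast_of_lt (hb p hp).2⟩
    have hsym : ∀ p ∈ PTree.cherryList T 0, ∀ q ∈ PTree.cherryList T 0, p ≠ q →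
        p.2 < q.1 ∨ q.2 < p.1 := by
      intro p hp q hq hne
      haveI : Std.Symm (fun p q : ℕ × ℕ => p.2 < q.1 ∨ q.2 < p.1) := ⟨fun a b h => Or.symm h⟩
      have hpw' : (PTree.cherryList T 0).Pairwise
          (fun p q : ℕ × ℕ => p.2 < q.1 ∨ q.2 < p.1) := hpw.imp fun h => Or.inl h
      exact hpw'.forall hp hq hne
    constructor
    · constructor
      · rintro pf hpf
        obtain ⟨p, hp, rfl⟩ := Finset.mem_image.mp hpf
        have hp' := List.mem_toFinset.mp hp
        obtain ⟨e1, -, -⟩ := hspec p hp'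
        obtain ⟨v1, v2⟩ := hval p hp'
        intro he
        have hv : p.1 = p.2 := by
          have hvv := congrArg Fin.val he
          simp only [hemb] at hvv
          rwa [v1, v2] at hvv
        omega
      · rintro pf hpf qf hqf hne
        obtain ⟨p, hp, rfl⟩ := Finset.mem_image.mp hpf
        obtain ⟨q, hq, rfl⟩ := Finset.mem_image.mp hqf
        have hp' := List.mem_toFinset.mp hp
        have hq' := List.mem_toFinset.mp hq
        have hpq : p ≠ q := by rintro rfl; exact hne rfl
        have hd := hsym p hp' q hq' hpq
        obtain ⟨e1, -, -⟩ := hspec p hp'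
        obtain ⟨f1, -, -⟩ := hspec q hq'
        obtain ⟨v1, v2⟩ := hval p hp'
        obtain ⟨w1, w2⟩ := hval q hq'
        refine ⟨?_, ?_, ?_, ?_⟩ <;>
          · intro he
            have hv := congrArg Fin.val he
            simp only [hemb] at hv
            simp only [v1, v2, w1, w2] at hv
            omega
    · rw [Finset.card_image_of_injOn, List.toFinset_card_of_nodup hnd, hlen]
      intro p hp q hq he
      have hp' := List.mem_toFinset.mp (Finset.mem_coe.mp hp)
      have hq' := List.mem_toFinset.mp (Finset.mem_coe.mp hq)
      obtain ⟨v1, v2⟩ := hval p hp'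
      obtain ⟨w1, w2⟩ := hval q hq'
      have he1 := congrArg (fun x : Fin n × Fin n => (x.1 : ℕ)) he
      have he2 := congrArg (fun x : Fin n × Fin n => (x.2 : ℕ)) he
      simp only [hemb] at he1 he2
      rw [v1, w1] at he1
      rw [v2, w2] at he2
      exact Prod.ext he1 he2
  obtain ⟨hG₁, hcard₁⟩ := mk B₁ h1
  obtain ⟨hG₂, hcard₂⟩ := mk B₂ h2
  have hinjOn₁ : Set.InjOn emb ((PTree.cherryList B₁ 0).toFinset : Set (ℕ × ℕ)) := by
    intro p hp q hq he
    have hp' := List.mem_toFinset.mp (Finset.mem_coe.mp hp)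
    have hq' := List.mem_toFinset.mp (Finset.mem_coe.mp hq)
    have he1 := congrArg (fun x : Fin n × Fin n => (x.1 : ℕ)) he
    have he2 := congrArg (fun x : Fin n × Fin n => (x.2 : ℕ)) he
    simp only [hemb] at he1 he2
    rw [Fin.val_cast_of_lt (hb₁ p hp').1, Fin.val_cast_of_lt (hb₁ q hq').1] at he1
    rw [Fin.val_cast_of_lt (hb₁ p hp').2, Fin.val_cast_of_lt (hb₁ q hq').2] at he2
    exact Prod.ext he1 he2
  have hgetD_ofFn : ∀ (σ : Equiv.Perm (Fin n)) (x : ℕ), x < n →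
      (List.ofFn fun i : Fin n => ((σ i : Fin n) : ℕ)).getD x 0
        = ((σ (x : Fin n) : Fin n) : ℕ) := by
    intro σ x hx
    have hx' : x < (List.ofFn fun i : Fin n => ((σ i : Fin n) : ℕ)).length := by simpa using hx
    rw [List.getD_eq_getElem _ _ hx']
    rw [List.getElem_ofFn]
    congr 2
    exact Fin.ext (by simp [Fin.val_cast_of_lt hx])
  have transfer : ∀ σ : Equiv.Perm (Fin n),
      PTree.matchedCherries B₁ B₂ (List.ofFn fun i : Fin n => ((σ i : Fin n) : ℕ))
        = (C₁.filter (MatchedP C₂ σ)).card := by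
    intro σ
    have hpred : ∀ p ∈ PTree.cherryList B₁ 0,
        (((PTree.cherryList B₂ 0).any fun q =>
          ((List.ofFn fun i : Fin n => ((σ i : Fin n) : ℕ)).getD p.1 0 == q.1 &&
           (List.ofFn fun i : Fin n => ((σ i : Fin n) : ℕ)).getD p.2 0 == q.2) ||
          ((List.ofFn fun i : Fin n => ((σ i : Fin n) : ℕ)).getD p.1 0 == q.2 &&
           (List.ofFn fun i : Fin n => ((σ i : Fin n) : ℕ)).getD p.2 0 == q.1)) = true)
        ↔ MatchedP C₂ σ (emb p) := by
      intro p hp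
      obtain ⟨hp1, hp2⟩ := hb₁ p hp
      rw [List.any_eq_true]
      constructor
      · rintro ⟨q, hq, hcond⟩
        obtain ⟨hq1, hq2⟩ := hb₂ q hq
        refine ⟨emb q, Finset.mem_image_of_mem emb (List.mem_toFinset.mpr hq), ?_⟩
        simp only [Bool.or_eq_true, Bool.and_eq_true, beq_iff_eq] at hcond
        rw [hgetD_ofFn σ p.1 hp1, hgetD_ofFn σ p.2 hp2] at hcond
        rcases hcond with ⟨ha, hb⟩ | ⟨ha, hb⟩
        · exact Or.inl ⟨Fin.ext (by rw [Fin.val_cast_of_lt hq1]; exact ha),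
            Fin.ext (by rw [Fin.val_cast_of_lt hq2]; exact hb)⟩
        · exact Or.inr ⟨Fin.ext (by rw [Fin.val_cast_of_lt hq2]; exact ha),
            Fin.ext (by rw [Fin.val_cast_of_lt hq1]; exact hb)⟩
      · rintro ⟨qf, hqf, hcond⟩
        rw [hC2] at hqf
        obtain ⟨q, hq, rfl⟩ := Finset.mem_image.mp hqf
        have hq' := List.mem_toFinset.mp hq
        obtain ⟨hq1, hq2⟩ := hb₂ q hq'
        refine ⟨q, hq', ?_⟩
        simp only [Bool.or_eq_true, Bool.and_eq_true, beq_iff_eq]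
        rw [hgetD_ofFn σ p.1 hp1, hgetD_ofFn σ p.2 hp2]
        rcases hcond with ⟨ha, hb⟩ | ⟨ha, hb⟩
        · exact Or.inl ⟨by rw [ha]; exact Fin.val_cast_of_lt hq1,
            by rw [hb]; exact Fin.val_cast_of_lt hq2⟩
        · exact Or.inr ⟨by rw [ha]; exact Fin.val_cast_of_lt hq2,
            by rw [hb]; exact Fin.val_cast_of_lt hq1⟩
    show (PTree.cherryList B₁ 0).countP _ = _
    rw [List.countP_eq_length_filter,
      ← List.toFinset_card_of_nodup (hnd₁.filter _), List.toFinset_filter]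
    rw [hC1, Finset.filter_image, Finset.card_image_of_injOn
      (hinjOn₁.mono (by exact_mod_cast Finset.filter_subset _ _))]
    apply congrArg
    apply Finset.filter_congr
    intro p hp
    have hp' := List.mem_toFinset.mp hp
    rw [← hpred p hp']
  set gfun : List ℕ → Fin n → Fin n :=
    fun L i => ⟨L.getD (i : ℕ) 0 % n, Nat.mod_lt _ (by omega)⟩ with hgfun
  set toPerm : List ℕ → Equiv.Perm (Fin n) :=
    fun L => if h : Function.Bijective (gfun L) then Equiv.ofBijective _ h else 1 with htoPerm
  have hLfacts : ∀ L ∈ (List.range n).permutations.toFinset,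
      (∀ i : Fin n, ((toPerm L i : Fin n) : ℕ) = L.getD (i : ℕ) 0) := by
    intro L hL
    have hperm : List.Perm L (List.range n) := List.mem_permutations.mp (List.mem_toFinset.mp hL)
    have hlenL : L.length = n := hperm.length_eq.trans List.length_range
    have hentry : ∀ i : ℕ, i < n → L.getD i 0 < n := by
      intro i hi
      have hi' : i < L.length := by omega
      rw [List.getD_eq_getElem _ _ hi']
      exact List.mem_range.mp (hperm.subset (List.getElem_mem hi'))
    have hnodL : L.Nodup := hperm.nodup_iff.mpr (List.nodup_range)
    have hginj : Function.Injective (gfun L) := by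
      intro i j he
      have hv := congrArg Fin.val he
      simp only [hgfun] at hv
      rw [Nat.mod_eq_of_lt (hentry _ i.isLt), Nat.mod_eq_of_lt (hentry _ j.isLt)] at hv
      rw [List.getD_eq_getElem _ _ (by omega : (i : ℕ) < L.length),
        List.getD_eq_getElem _ _ (by omega : (j : ℕ) < L.length)] at hv
      exact Fin.ext ((List.Nodup.getElem_inj_iff hnodL).mp hv)
    have hbijg : Function.Bijective (gfun L) := Finite.injective_iff_bijective.mp hginj
    intro i
    simp only [htoPerm, dif_pos hbijg]
    show ((gfun L) i : ℕ) = _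
    simp only [hgfun]
    exact Nat.mod_eq_of_lt (hentry _ i.isLt)
  have hofFn : ∀ L ∈ (List.range n).permutations.toFinset,
      List.ofFn (fun i : Fin n => ((toPerm L i : Fin n) : ℕ)) = L := by
    intro L hL
    have hperm : List.Perm L (List.range n) := List.mem_permutations.mp (List.mem_toFinset.mp hL)
    have hlenL : L.length = n := hperm.length_eq.trans List.length_range
    apply List.ext_getElem (by simp [hlenL])
    intro i h1' h2'
    rw [List.getElem_ofFn, hLfacts L hL]
    show L.getD i 0 = L[i]
    exact List.getD_eq_getElem L 0 h2'
  have hofFn_mem : ∀ σ : Equiv.Perm (Fin n),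
      (List.ofFn fun i : Fin n => ((σ i : Fin n) : ℕ)) ∈
        (List.range n).permutations.toFinset := by
    intro σ
    apply List.mem_toFinset.mpr
    apply List.mem_permutations.mpr
    apply List.perm_of_nodup_nodup_toFinset_eq
    · exact List.nodup_ofFn.mpr (fun i j h => σ.injective (Fin.ext h))
    · exact List.nodup_range
    · ext x
      simp only [List.mem_toFinset, List.mem_ofFn, Set.mem_range, List.mem_range]
      constructor
      · rintro ⟨i, rfl⟩
        exact (σ i).isLt
      · intro hx
        exact ⟨σ.symm ⟨x, hx⟩, by simp⟩
  have hbij : (((List.range n).permutations.toFinset).filter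
        (fun L => PTree.matchedCherries B₁ B₂ L = k)).card
      = (Finset.univ.filter fun σ : Equiv.Perm (Fin n) =>
          (C₁.filter (MatchedP C₂ σ)).card = k).card := by
    apply Finset.card_bij' (i := fun L _ => toPerm L)
      (j := fun σ _ => List.ofFn fun i : Fin n => ((σ i : Fin n) : ℕ))
    · intro L hL
      obtain ⟨hL1, hL2⟩ := Finset.mem_filter.mp hL
      refine Finset.mem_filter.mpr ⟨Finset.mem_univ _, ?_⟩
      rw [← transfer (toPerm L), hofFn L hL1]
      exact hL2
    · intro σ hσ
      obtain ⟨-, hσ2⟩ := Finset.mem_filter.mp hσ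
      refine Finset.mem_filter.mpr ⟨hofFn_mem σ, ?_⟩
      rw [transfer σ]
      exact hσ2
    · intro L hL
      exact hofFn L (Finset.mem_filter.mp hL).1
    · intro σ hσ
      apply Equiv.ext
      intro i
      apply Fin.ext
      rw [hLfacts _ (hofFn_mem σ) i, hgetD_ofFn σ (i : ℕ) i.isLt]
      congr 2
      exact Fin.cast_val_eq_self i
  rw [hbij]
  rw [card_exact_matched C₁ C₂ hG₁ hG₂ k, hcard₁, hcard₂]
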